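/- arXiv:2206.10603 — 2 statements merged into one kernel-verified Lean document; each statement's English description precedes it below -/
import Mathlib

section
/- Let X and Y be independent distributions on G^t and let Z be the interleaved product X_1 Y_1 ... X_t Y_t. Then for every irreducible representation ρ of G, tr(Ẑ(ρ)) = |G|^{2t-1} Σ_{i_1,...,i_{2t}} X̂(ρ̄^{⊗t})_{i_1,...,i_{2t}} · Ŷ'(ρ̄^{⊗t})_{i_1,...,i_{2t}}, i.e., the trace of the Fourier coefficient of Z equals |G|^{2t-1} times the entrywise inner product of the tensor-power Fourier coefficients of X and a cyclically shifted version of Y. -/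
open Matrix Finset

lemma snoc_succ' {α : Type*} {t : ℕ} (b : α) (a : Fin t → α) (j : α) (k : Fin (t+1)) :
    (Fin.snoc (Fin.cons b a : Fin (t+1) → α) j : Fin (t+2) → α) k.succ
      = (Fin.snoc a j : Fin (t+1) → α) k := by
  refine Fin.lastCases ?_ (fun l => ?_) k
  · simp
  · rw [Fin.succ_castSucc, Fin.snoc_castSucc, Fin.snoc_castSucc, Fin.cons_succ]

lemma listProd_entry {m : ℕ} : ∀ (t : ℕ) (M : Fin (t+1) → Matrix (Fin m) (Fin m) ℂ)
    (i j : Fin m),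
    (List.ofFn M).prod i j =
      ∑ a : Fin t → Fin m, ∏ k : Fin (t+1),
        M k ((Fin.cons i a : Fin (t+1) → Fin m) k) ((Fin.snoc a j : Fin (t+1) → Fin m) k)
  | 0, M, i, j => by
      simp [Fin.snoc]
  | (t+1), M, i, j => by
      rw [List.ofFn_succ, List.prod_cons, Matrix.mul_apply]
      simp_rw [listProd_entry t (fun k => M k.succ)]
      rw [← (Fin.consEquiv (fun _ : Fin (t+1) => Fin m)).sum_comp, Fintype.sum_prod_type]
      simp only [Fin.consEquiv, Equiv.coe_fn_mk]
      simp_rw [Finset.mul_sum]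
      refine Finset.sum_congr rfl fun b _ => Finset.sum_congr rfl fun a _ => ?_
      conv_rhs => rw [Fin.prod_univ_succ]
      congr 1
      · exact Finset.prod_congr rfl fun k _ => by rw [Fin.cons_succ, snoc_succ']

lemma snoc_eq_cons_cyc {α : Type*} {s : ℕ} (i : α) (a : Fin s → α) (k : Fin (s+1)) :
    (Fin.snoc a i : Fin (s+1) → α) k =
      (Fin.cons i a : Fin (s+1) → α) ⟨(k.1+1) % (s+1), Nat.mod_lt _ (Nat.succ_pos s)⟩ := by
  refine Fin.lastCases ?_ (fun l => ?_) k
  · rw [Fin.snoc_last]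
    have h : (⟨((Fin.last s).1+1) % (s+1), Nat.mod_lt _ (Nat.succ_pos s)⟩ : Fin (s+1)) = 0 := by
      ext; simp [Fin.last, Nat.mod_self]
    rw [h, Fin.cons_zero]
  · rw [Fin.snoc_castSucc]
    have h : (⟨((Fin.castSucc l).1+1) % (s+1), Nat.mod_lt _ (Nat.succ_pos s)⟩ : Fin (s+1))
        = l.succ := by
      ext; simp [Nat.mod_eq_of_lt (by omega : l.1+1 < s+1)]
    rw [h, Fin.cons_succ]

lemma trace_listProd {m : ℕ} {t : ℕ} (ht : 0 < t) (M : Fin t → Matrix (Fin m) (Fin m) ℂ) :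
    Matrix.trace (List.ofFn M).prod =
      ∑ a : Fin t → Fin m, ∏ k : Fin t, M k (a k) (a ⟨(k.1+1) % t, Nat.mod_lt _ ht⟩) := by
  obtain ⟨s, rfl⟩ : ∃ s, t = s+1 := ⟨t-1, (Nat.succ_pred_eq_of_pos ht).symm⟩
  rw [Matrix.trace]
  simp only [Matrix.diag_apply]
  simp_rw [listProd_entry s M]
  rw [← (Fin.consEquiv (fun _ : Fin (s+1) => Fin m)).sum_comp, Fintype.sum_prod_type]
  simp only [Fin.consEquiv, Equiv.coe_fn_mk]
  refine Finset.sum_congr rfl fun i _ => Finset.sum_congr rfl fun a _ =>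
    Finset.prod_congr rfl fun k _ => ?_
  rw [snoc_eq_cons_cyc]

lemma key_trace {G : Type*} [Group G] {m t : ℕ} (ht : 0 < t)
    (σ : G →* Matrix (Fin m) (Fin m) ℂ) (x y : Fin t → G) :
    Matrix.trace (σ (List.ofFn fun k => x k * y k).prod) =
      ∑ a : Fin t → Fin m, ∑ b : Fin t → Fin m,
        (∏ k : Fin t, σ (x k) (a k) (b k)) *
        ∏ k : Fin t, σ (y k) (b k) (a ⟨(k.1+1) % t, Nat.mod_lt _ ht⟩) := by
  rw [map_list_prod, List.map_ofFn]
  simp_rw [Function.comp_def, _root_.map_mul]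
  rw [trace_listProd ht]
  refine Finset.sum_congr rfl fun a _ => ?_
  simp_rw [Matrix.mul_apply]
  rw [Finset.prod_univ_sum]
  rw [Fintype.piFinset_univ]
  exact Finset.sum_congr rfl fun b _ => Finset.prod_mul_distrib

lemma sum4_swap {α β γ δ M : Type*} [Fintype α] [Fintype β] [Fintype γ] [Fintype δ]
    [AddCommMonoid M] (f : α → β → γ → δ → M) :
    ∑ a : α, ∑ b : β, ∑ x : γ, ∑ y : δ, f a b x y
      = ∑ x : γ, ∑ y : δ, ∑ a : α, ∑ b : β, f a b x y := by
  have h1 : ∀ a : α, (∑ b : β, ∑ x : γ, ∑ y : δ, f a b x y)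
      = ∑ x : γ, ∑ b : β, ∑ y : δ, f a b x y := fun a => Finset.sum_comm
  simp_rw [h1]
  rw [show (∑ a : α, ∑ x : γ, ∑ b : β, ∑ y : δ, f a b x y)
      = ∑ x : γ, ∑ a : α, ∑ b : β, ∑ y : δ, f a b x y from Finset.sum_comm]
  refine Finset.sum_congr rfl fun x _ => ?_
  have h3 : ∀ a : α, (∑ b : β, ∑ y : δ, f a b x y)
      = ∑ y : δ, ∑ b : β, f a b x y := fun a => Finset.sum_comm
  simp_rw [h3]
  exact Finset.sum_comm


/-- The "critical equation": the trace of the Fourier coefficient of the interleaved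
product `Z = X₁Y₁⋯XₜYₜ` at a representation `ρ` equals `|G|^{2t-1}` times the entrywise
inner product of the tensor-power Fourier coefficient of `X` (at index pairs
`(a k, b k)`) and the cyclically shifted one of `Y` (at index pairs `(b k, a (k+1))`). -/
theorem trace_fourier_interleaved {G : Type*} [Group G] [Fintype G] [DecidableEq G]
    (t : ℕ) (ht : 0 < t)
    (X Y : (Fin t → G) → ℝ)
    (hX0 : ∀ x, 0 ≤ X x) (hX1 : ∑ x : Fin t → G, X x = 1)
    (hY0 : ∀ y, 0 ≤ Y y) (hY1 : ∑ y : Fin t → G, Y y = 1)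
    (Z : G → ℝ)
    (hZ : ∀ g : G, Z g = ∑ x : Fin t → G, ∑ y : Fin t → G,
        if (List.ofFn fun k => x k * y k).prod = g then X x * Y y else 0)
    (m : ℕ) (ρ : G →* Matrix (Fin m) (Fin m) ℂ) :
    Matrix.trace ((Fintype.card G : ℂ)⁻¹ •
        ∑ g : G, (Z g : ℂ) • (ρ g).map (starRingEnd ℂ)) =
    (Fintype.card G : ℂ) ^ (2 * t - 1) *
      ∑ a : Fin t → Fin m, ∑ b : Fin t → Fin m,
        (((Fintype.card G : ℂ) ^ t)⁻¹ * ∑ x : Fin t → G, (X x : ℂ) *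
            ∏ k : Fin t, ((ρ (x k)).map (starRingEnd ℂ)) (a k) (b k)) *
        (((Fintype.card G : ℂ) ^ t)⁻¹ * ∑ y : Fin t → G, (Y y : ℂ) *
            ∏ k : Fin t, ((ρ (y k)).map (starRingEnd ℂ)) (b k)
              (a ⟨(k.val + 1) % t, Nat.mod_lt _ ht⟩)) := by
  classical
  have hc : (Fintype.card G : ℂ) ≠ 0 := Nat.cast_ne_zero.mpr Fintype.card_ne_zero
  set c : ℂ := (Fintype.card G : ℂ) with hcdef
  set σ : G →* Matrix (Fin m) (Fin m) ℂ :=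
    ((RingHom.mapMatrix (starRingEnd ℂ)).toMonoidHom.comp ρ) with hσdef
  have hσ : ∀ g, (ρ g).map (starRingEnd ℂ) = σ g := fun g => rfl
  simp_rw [hσ]
  -- LHS
  rw [Matrix.trace_smul, Matrix.trace_sum]
  simp_rw [Matrix.trace_smul, smul_eq_mul]
  simp_rw [hZ]
  push_cast [apply_ite (Complex.ofReal)]
  simp_rw [Finset.sum_mul, ite_mul, zero_mul]
  rw [Finset.sum_comm]
  have hL : ∀ x : Fin t → G,
      (∑ g : G, ∑ y : Fin t → G,
        if (List.ofFn fun k => x k * y k).prod = g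
        then ((X x : ℂ) * (Y y : ℂ)) * Matrix.trace (σ g) else 0)
      = ∑ y : Fin t → G, ((X x : ℂ) * (Y y : ℂ)) *
          Matrix.trace (σ (List.ofFn fun k => x k * y k).prod) := by
    intro x
    rw [Finset.sum_comm]
    exact Finset.sum_congr rfl fun y _ => by rw [Finset.sum_ite_eq Finset.univ]; simp
  simp_rw [hL]
  simp_rw [key_trace ht σ]
  -- RHS
  simp_rw [mul_mul_mul_comm, ← Finset.mul_sum]
  have hconst : c ^ (2 * t - 1) * ((c ^ t)⁻¹ * (c ^ t)⁻¹) = c⁻¹ := by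
    have h2 : c ^ t ≠ 0 := pow_ne_zero _ hc
    field_simp
    rw [← pow_succ, ← pow_mul]
    congr 1
    omega
  conv_rhs => rw [← mul_assoc, hconst]
  congr 1
  rw [show (∑ a : Fin t → Fin m, ∑ b : Fin t → Fin m,
      (∑ x : Fin t → G, (X x : ℂ) * ∏ k : Fin t, σ (x k) (a k) (b k)) *
      (∑ y : Fin t → G, (Y y : ℂ) * ∏ k : Fin t, σ (y k) (b k)
          (a ⟨(k.val + 1) % t, Nat.mod_lt _ ht⟩)))
    = ∑ a : Fin t → Fin m, ∑ b : Fin t → Fin m, ∑ x : Fin t → G, ∑ y : Fin t → G,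
        ((X x : ℂ) * ∏ k : Fin t, σ (x k) (a k) (b k)) *
        ((Y y : ℂ) * ∏ k : Fin t, σ (y k) (b k)
          (a ⟨(k.val + 1) % t, Nat.mod_lt _ ht⟩))
    from by simp_rw [Finset.sum_mul_sum]]
  rw [sum4_swap]
  refine Finset.sum_congr rfl fun x _ => Finset.sum_congr rfl fun y _ => ?_
  simp_rw [mul_mul_mul_comm, ← Finset.mul_sum]
end

section
/- Let X, Y be independent distributions on G^t and Z the interleaved product X_1 Y_1 ... X_t Y_t. Then for every irreducible representation ρ of G, |tr(Ẑ(ρ))| ≤ |G|^{2t-1} · ||X̂(ρ^{⊗t})||_2 · ||Ŷ(ρ^{⊗t})||_2, where ||·||_2 denotes the Frobenius (entrywise L2) norm of the tensor Fourier coefficient. -/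
open Finset Matrix

private lemma prod_path {m : ℕ} : ∀ {n : ℕ} (C : Fin n → Matrix (Fin m) (Fin m) ℂ) (i j : Fin m),
    (List.ofFn C).prod i j =
      ∑ p : Fin (n + 1) → Fin m,
        if p 0 = i ∧ p (Fin.last n) = j then ∏ k : Fin n, C k (p k.castSucc) (p k.succ)
        else 0 := by
  intro n
  induction n with
  | zero =>
    intro C i j
    rw [← (Fin.consEquiv (fun _ : Fin 1 => Fin m)).sum_comp, Fintype.sum_prod_type]
    simp only [Matrix.one_apply, Fin.consEquiv, Equiv.coe_fn_mk, List.ofFn_zero,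
      List.prod_nil, Finset.prod_empty, show (Fin.last 0 : Fin 1) = 0 from rfl, Fin.cons_zero]
    simp only [Finset.sum_const, Finset.univ_unique, Finset.card_singleton, one_smul]
    by_cases h : i = j
    · subst h
      rw [Finset.sum_eq_single i] <;> simp +contextual [eq_comm]
    · rw [if_neg h, Finset.sum_eq_zero]
      intro x _
      rw [Finset.sum_singleton, if_neg]
      rintro ⟨rfl, rfl⟩; exact h rfl
  | succ n ih =>
    intro C i j
    rw [List.ofFn_succ, List.prod_cons, Matrix.mul_apply]
    simp_rw [ih]
    rw [← (Fin.consEquiv (fun _ : Fin (n+2) => Fin m)).sum_comp, Fintype.sum_prod_type]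
    simp only [Fin.consEquiv, Equiv.coe_fn_mk, ← Fin.succ_last, Fin.cons_succ,
      Fin.prod_univ_succ, Fin.castSucc_zero, Fin.cons_zero, ← Fin.succ_castSucc]
    conv_lhs => simp only [Finset.mul_sum, mul_ite, mul_zero]
    rw [Finset.sum_comm]
    simp only [ite_and, Finset.sum_ite_eq, Finset.mem_univ, if_true]
    conv_rhs => rw [Finset.sum_comm]
    simp only [Finset.sum_ite_eq', Finset.mem_univ, if_true]

private lemma fin_last_add_one {n : ℕ} : (Fin.last n) + 1 = 0 := by
  ext
  simp [Fin.add_def, Fin.last]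

private lemma fin_castSucc_add_one {n : ℕ} (i : Fin n) : (Fin.castSucc i) + 1 = i.succ := by
  ext
  rw [Fin.val_add_one_of_lt (Fin.castSucc_lt_last i)]
  simp

private lemma snoc_succ_eq {m s : ℕ} (a : Fin (s + 1) → Fin m) (k : Fin (s + 1)) :
    (Fin.snoc a (a 0) : Fin (s + 2) → Fin m) k.succ = a (k + 1) := by
  rcases Fin.eq_castSucc_or_eq_last k with ⟨j, rfl⟩ | rfl
  · rw [Fin.succ_castSucc, Fin.snoc_castSucc, fin_castSucc_add_one]
  · rw [Fin.succ_last, Fin.snoc_last, fin_last_add_one]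

private lemma trace_cyclic {m s : ℕ} (M N : Fin (s + 1) → Matrix (Fin m) (Fin m) ℂ) :
    Matrix.trace (List.ofFn fun k => M k * N k).prod =
      ∑ a : Fin (s + 1) → Fin m, ∑ b : Fin (s + 1) → Fin m,
        (∏ k, M k (a k) (b k)) * ∏ k, N k (b k) (a (k + 1)) := by
  rw [Matrix.trace]
  simp only [Matrix.diag_apply, prod_path]
  rw [Finset.sum_comm]
  have h1 : ∀ p : Fin (s + 2) → Fin m,
      (∑ i : Fin m, if p 0 = i ∧ p (Fin.last (s + 1)) = i then
          (∏ k : Fin (s + 1), (M k * N k) (p k.castSucc) (p k.succ)) else 0)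
      = if p (Fin.last (s + 1)) = p 0 then
          ∏ k : Fin (s + 1), (M k * N k) (p k.castSucc) (p k.succ) else 0 := by
    intro p
    simp only [ite_and]
    rw [Finset.sum_ite_eq univ (p 0), if_pos (Finset.mem_univ _)]
  simp only [h1]
  rw [← (Fin.snocEquiv (fun _ : Fin (s + 2) => Fin m)).sum_comp, Fintype.sum_prod_type]
  simp only [Fin.snocEquiv, Equiv.coe_fn_mk, Fin.snoc_last,
    show (0 : Fin (s + 2)) = (0 : Fin (s + 1)).castSucc by simp, Fin.snoc_castSucc]
  rw [Finset.sum_comm]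
  simp only [Finset.sum_ite_eq', Finset.mem_univ, if_true]
  simp only [snoc_succ_eq, Matrix.mul_apply, Fintype.prod_sum]
  exact Finset.sum_congr rfl fun a _ => Finset.sum_congr rfl fun b _ =>
    Finset.prod_mul_distrib

private lemma sum_swap4 {A B C D M : Type*} [Fintype A] [Fintype B] [Fintype C] [Fintype D]
    [AddCommMonoid M] (f : A → B → C → D → M) :
    ∑ a, ∑ b, ∑ c, ∑ d, f a b c d = ∑ c, ∑ d, ∑ a, ∑ b, f a b c d :=
  calc ∑ a, ∑ b, ∑ c, ∑ d, f a b c d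
      = ∑ a, ∑ c, ∑ b, ∑ d, f a b c d :=
        Finset.sum_congr rfl fun _ _ => Finset.sum_comm
    _ = ∑ c, ∑ a, ∑ b, ∑ d, f a b c d := Finset.sum_comm
    _ = ∑ c, ∑ a, ∑ d, ∑ b, f a b c d :=
        Finset.sum_congr rfl fun _ _ => Finset.sum_congr rfl fun _ _ => Finset.sum_comm
    _ = ∑ c, ∑ d, ∑ a, ∑ b, f a b c d :=
        Finset.sum_congr rfl fun _ _ => Finset.sum_comm

private lemma collapse_sum {G A B : Type*} [Fintype G] [DecidableEq G] [Fintype A] [Fintype B]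
    (W : G → ℂ) (P : A → B → G) (c : A → B → ℂ) :
    ∑ g : G, (∑ x : A, ∑ y : B, if P x y = g then c x y else 0) * W g
      = ∑ x : A, ∑ y : B, c x y * W (P x y) := by
  simp_rw [Finset.sum_mul, ite_mul, zero_mul]
  rw [Finset.sum_comm]
  refine Finset.sum_congr rfl fun x _ => ?_
  rw [Finset.sum_comm]
  refine Finset.sum_congr rfl fun y _ => ?_
  rw [Finset.sum_ite_eq univ (P x y) (fun g => c x y * W g), if_pos (Finset.mem_univ _)]

private lemma step2 {G : Type*} [Group G] [Fintype G] {m s : ℕ}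
    (φ : G →* Matrix (Fin m) (Fin m) ℂ) (X Y : (Fin (s + 1) → G) → ℝ) :
    ∑ x : Fin (s + 1) → G, ∑ y : Fin (s + 1) → G,
        ((X x : ℂ) * Y y) * Matrix.trace (φ ((List.ofFn fun k => x k * y k).prod))
      = ∑ a : Fin (s + 1) → Fin m, ∑ b : Fin (s + 1) → Fin m,
          (∑ x : Fin (s + 1) → G, (X x : ℂ) * ∏ k, φ (x k) (a k) (b k)) *
          (∑ y : Fin (s + 1) → G, (Y y : ℂ) * ∏ k, φ (y k) (b k) (a (k + 1))) := by
  have h : ∀ x y : Fin (s + 1) → G,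
      φ ((List.ofFn fun k => x k * y k).prod) = (List.ofFn fun k => φ (x k) * φ (y k)).prod := by
    intro x y
    rw [map_list_prod, List.map_ofFn]
    exact congrArg List.prod (congrArg List.ofFn (funext fun k => map_mul φ (x k) (y k)))
  simp_rw [h, trace_cyclic, Finset.sum_mul_sum, Finset.mul_sum]
  rw [sum_swap4]
  refine Finset.sum_congr rfl fun a _ => Finset.sum_congr rfl fun b _ =>
    Finset.sum_congr rfl fun x _ => Finset.sum_congr rfl fun y _ => ?_
  ring

private lemma final_ineq {m s c : ℕ} (hc : 0 < c)
    (Sx Sy : (Fin (s + 1) → Fin m) → (Fin (s + 1) → Fin m) → ℂ) :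
    ‖(c : ℂ)⁻¹ * ∑ a : Fin (s + 1) → Fin m, ∑ b : Fin (s + 1) → Fin m,
        Sx a b * Sy b (fun k => a (k + 1))‖
      ≤ (c : ℝ) ^ (2 * (s + 1) - 1) *
        Real.sqrt (∑ a : Fin (s + 1) → Fin m, ∑ b : Fin (s + 1) → Fin m,
          ‖((c : ℂ) ^ (s + 1))⁻¹ * Sx a b‖ ^ 2) *
        Real.sqrt (∑ a : Fin (s + 1) → Fin m, ∑ b : Fin (s + 1) → Fin m,
          ‖((c : ℂ) ^ (s + 1))⁻¹ * Sy a b‖ ^ 2) := by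
  have hc' : (0 : ℝ) < (c : ℝ) := by exact_mod_cast hc
  set ι := (Fin (s + 1) → Fin m) × (Fin (s + 1) → Fin m)
  set F : ι → ℝ := fun p => ‖Sx p.1 p.2‖ with hF
  set Gf : ι → ℝ := fun p => ‖Sy p.2 (fun k => p.1 (k + 1))‖ with hGf
  have hFn : ∀ p, 0 ≤ F p := fun p => norm_nonneg _
  have hGn : ∀ p, 0 ≤ Gf p := fun p => norm_nonneg _
  -- step 1 : triangle inequality
  have hstep1 : ‖(c : ℂ)⁻¹ * ∑ a : Fin (s + 1) → Fin m, ∑ b : Fin (s + 1) → Fin m,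
      Sx a b * Sy b (fun k => a (k + 1))‖ ≤ (c : ℝ)⁻¹ * ∑ p : ι, F p * Gf p := by
    rw [norm_mul, norm_inv, Complex.norm_natCast]
    refine mul_le_mul_of_nonneg_left ?_ (by positivity)
    calc ‖∑ a : Fin (s + 1) → Fin m, ∑ b : Fin (s + 1) → Fin m,
            Sx a b * Sy b (fun k => a (k + 1))‖
        ≤ ∑ a : Fin (s + 1) → Fin m, ∑ b : Fin (s + 1) → Fin m,
            ‖Sx a b * Sy b (fun k => a (k + 1))‖ :=
          (norm_sum_le _ _).trans
            (Finset.sum_le_sum fun a _ => norm_sum_le _ _)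
      _ = ∑ p : ι, F p * Gf p := by
          rw [Fintype.sum_prod_type]
          exact Finset.sum_congr rfl fun a _ => Finset.sum_congr rfl fun b _ => norm_mul _ _
  -- step 2 : Cauchy-Schwarz
  have hCS : ∑ p : ι, F p * Gf p ≤
      Real.sqrt (∑ p : ι, F p ^ 2) * Real.sqrt (∑ p : ι, Gf p ^ 2) := by
    have h2 := Finset.sum_mul_sq_le_sq_mul_sq Finset.univ F Gf
    have h3 : 0 ≤ ∑ p : ι, F p * Gf p :=
      Finset.sum_nonneg fun p _ => mul_nonneg (hFn p) (hGn p)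
    calc ∑ p : ι, F p * Gf p = Real.sqrt ((∑ p : ι, F p * Gf p) ^ 2) :=
          (Real.sqrt_sq h3).symm
      _ ≤ Real.sqrt ((∑ p : ι, F p ^ 2) * ∑ p : ι, Gf p ^ 2) := Real.sqrt_le_sqrt h2
      _ = Real.sqrt (∑ p : ι, F p ^ 2) * Real.sqrt (∑ p : ι, Gf p ^ 2) :=
          Real.sqrt_mul (Finset.sum_nonneg fun p _ => sq_nonneg _) _
  -- step 3 : reindex the Y part
  have hre : (∑ p : ι, Gf p ^ 2) = ∑ p : ι, ‖Sy p.1 p.2‖ ^ 2 := by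
    refine Fintype.sum_equiv
      (⟨fun p : ι => (p.2, fun k => p.1 (k + 1)), fun q => (fun k => q.2 (k - 1), q.1),
        fun p => ?_, fun q => ?_⟩ : ι ≃ ι) _ _ (fun p => rfl)
    · refine Prod.ext (funext fun k => ?_) rfl
      simp only
      rw [sub_add_cancel]
    · refine Prod.ext rfl (funext fun k => ?_)
      simp only
      rw [add_sub_cancel_right]
  -- step 4 : compute the two square roots on the RHS
  have habs : ∀ z : ℂ, ‖((c : ℂ) ^ (s + 1))⁻¹ * z‖ ^ 2
      = (((c : ℝ) ^ (s + 1))⁻¹) ^ 2 * ‖z‖ ^ 2 := by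
    intro z
    rw [norm_mul, norm_inv, norm_pow, Complex.norm_natCast, mul_pow]
  have hsx : Real.sqrt (∑ a : Fin (s + 1) → Fin m, ∑ b : Fin (s + 1) → Fin m,
        ‖((c : ℂ) ^ (s + 1))⁻¹ * Sx a b‖ ^ 2)
      = ((c : ℝ) ^ (s + 1))⁻¹ * Real.sqrt (∑ p : ι, F p ^ 2) := by
    simp_rw [habs, ← Finset.mul_sum]
    rw [Real.sqrt_mul (sq_nonneg _), Real.sqrt_sq (by positivity), Fintype.sum_prod_type]
  have hsy : Real.sqrt (∑ a : Fin (s + 1) → Fin m, ∑ b : Fin (s + 1) → Fin m,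
        ‖((c : ℂ) ^ (s + 1))⁻¹ * Sy a b‖ ^ 2)
      = ((c : ℝ) ^ (s + 1))⁻¹ * Real.sqrt (∑ p : ι, Gf p ^ 2) := by
    simp_rw [habs, ← Finset.mul_sum]
    rw [Real.sqrt_mul (sq_nonneg _), Real.sqrt_sq (by positivity), hre, Fintype.sum_prod_type]
  rw [hsx, hsy]
  have hconst : (c : ℝ) ^ (2 * (s + 1) - 1) * (((c : ℝ) ^ (s + 1))⁻¹ * ((c : ℝ) ^ (s + 1))⁻¹)
      = (c : ℝ)⁻¹ := by
    rw [show 2 * (s + 1) - 1 = 2 * s + 1 by omega]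
    field_simp
    ring
  calc ‖_‖ ≤ (c : ℝ)⁻¹ * ∑ p : ι, F p * Gf p := hstep1
    _ ≤ (c : ℝ)⁻¹ * (Real.sqrt (∑ p : ι, F p ^ 2) * Real.sqrt (∑ p : ι, Gf p ^ 2)) :=
        mul_le_mul_of_nonneg_left hCS (by positivity)
    _ = (c : ℝ) ^ (2 * (s + 1) - 1) * (((c : ℝ) ^ (s + 1))⁻¹ * Real.sqrt (∑ p : ι, F p ^ 2)) *
        (((c : ℝ) ^ (s + 1))⁻¹ * Real.sqrt (∑ p : ι, Gf p ^ 2)) := by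
        rw [← hconst]; ring

set_option maxHeartbeats 1000000 in
/-- Main claim (inequality (2)): for the interleaved product `Z = X₁Y₁⋯XₜYₜ`,
`|tr Ẑ(ρ)| ≤ |G|^{2t-1} ‖X̂(ρ^{⊗t})‖₂ ‖Ŷ(ρ^{⊗t})‖₂` in the Frobenius norm. -/
theorem trace_fourier_interleaved_bound {G : Type*} [Group G] [Fintype G] [DecidableEq G]
    (t : ℕ) (ht : 0 < t)
    (X Y : (Fin t → G) → ℝ)
    (hX0 : ∀ x, 0 ≤ X x) (hX1 : ∑ x : Fin t → G, X x = 1)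
    (hY0 : ∀ y, 0 ≤ Y y) (hY1 : ∑ y : Fin t → G, Y y = 1)
    (Z : G → ℝ)
    (hZ : ∀ g : G, Z g = ∑ x : Fin t → G, ∑ y : Fin t → G,
        if (List.ofFn fun k => x k * y k).prod = g then X x * Y y else 0)
    (m : ℕ) (ρ : G →* Matrix (Fin m) (Fin m) ℂ)
    (hirr : ∀ M : Matrix (Fin m) (Fin m) ℂ, (∀ g : G, M * ρ g = ρ g * M) →
      ∃ c : ℂ, M = c • (1 : Matrix (Fin m) (Fin m) ℂ)) :
    ‖Matrix.trace ((Fintype.card G : ℂ)⁻¹ •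
        ∑ g : G, (Z g : ℂ) • (ρ g).map (starRingEnd ℂ))‖ ≤
    (Fintype.card G : ℝ) ^ (2 * t - 1) *
      Real.sqrt (∑ a : Fin t → Fin m, ∑ b : Fin t → Fin m,
        ‖((Fintype.card G : ℂ) ^ t)⁻¹ * ∑ x : Fin t → G, (X x : ℂ) *
            ∏ k : Fin t, ((ρ (x k)).map (starRingEnd ℂ)) (a k) (b k)‖ ^ 2) *
      Real.sqrt (∑ a : Fin t → Fin m, ∑ b : Fin t → Fin m,
        ‖((Fintype.card G : ℂ) ^ t)⁻¹ * ∑ y : Fin t → G, (Y y : ℂ) *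
            ∏ k : Fin t, ((ρ (y k)).map (starRingEnd ℂ)) (a k) (b k)‖ ^ 2) := by
  obtain ⟨s, rfl⟩ : ∃ s, t = s + 1 := ⟨t - 1, (Nat.succ_pred_eq_of_pos ht).symm⟩
  clear ht hX0 hX1 hY0 hY1 hirr
  let φ : G →* Matrix (Fin m) (Fin m) ℂ := ((starRingEnd ℂ).mapMatrix.toMonoidHom.comp ρ)
  have hφ : ∀ g : G, (ρ g).map (starRingEnd ℂ) = φ g := fun g => rfl
  have key : Matrix.trace ((Fintype.card G : ℂ)⁻¹ •
        ∑ g : G, (Z g : ℂ) • (ρ g).map (starRingEnd ℂ))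
      = (Fintype.card G : ℂ)⁻¹ * ∑ a : Fin (s + 1) → Fin m, ∑ b : Fin (s + 1) → Fin m,
          (∑ x : Fin (s + 1) → G, (X x : ℂ) *
              ∏ k, ((ρ (x k)).map (starRingEnd ℂ)) (a k) (b k)) *
          (∑ y : Fin (s + 1) → G, (Y y : ℂ) *
              ∏ k, ((ρ (y k)).map (starRingEnd ℂ)) (b k) (a (k + 1))) := by
    rw [Matrix.trace_smul, smul_eq_mul, Matrix.trace_sum]
    congr 1
    simp_rw [Matrix.trace_smul, smul_eq_mul, hφ]
    have hZC : ∀ g : G, (Z g : ℂ) = ∑ x : Fin (s + 1) → G, ∑ y : Fin (s + 1) → G,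
        if (List.ofFn fun k => x k * y k).prod = g then (X x : ℂ) * (Y y : ℂ) else 0 := by
      intro g
      rw [hZ]
      push_cast [apply_ite (Complex.ofReal)]
      rfl
    simp_rw [hZC]
    rw [collapse_sum (fun g => Matrix.trace (φ g))
        (fun x y => (List.ofFn fun k => x k * y k).prod) (fun x y => (X x : ℂ) * Y y)]
    exact step2 φ X Y
  rw [key]
  exact final_ineq Fintype.card_pos
    (fun a b => ∑ x : Fin (s + 1) → G, (X x : ℂ) *
        ∏ k, ((ρ (x k)).map (starRingEnd ℂ)) (a k) (b k))
    (fun a b => ∑ y : Fin (s + 1) → G, (Y y : ℂ) *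
        ∏ k, ((ρ (y k)).map (starRingEnd ℂ)) (a k) (b k))
end
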